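/- Let X and Y be real random variables with finite means, distribution functions F and G, and right support endpoints u_X and u_Y, and let p_0 ∈ (0,1). Then X ≤_{p_0-tvar-rl} Y if, and only if, ∫_p^1 F^{-1}(u + (1-u)F(t)) du ≤ ∫_p^1 G^{-1}(u + (1-u)G(t)) du for all t < u_X, u_Y and all p ∈ [p_0, 1). -/

import Mathlib

open MeasureTheory ProbabilityTheory

/-- The quantile (Value at Risk) of a distribution function `F` at level `p`:
`F^{-1}(p) = inf {x : F x ≥ p}`. -/
noncomputable def quantile (F : ℝ → ℝ) (p : ℝ) : ℝ := sInf {x : ℝ | p ≤ F x}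

/-- The distribution function of the residual life `X_t = [X - t ∣ X > t]`:
`F_t(x) = (F(x+t) - F(t))/(1 - F(t))` for `x ≥ 0`, and `0` otherwise. -/
noncomputable def resCDF (F : ℝ → ℝ) (t : ℝ) (x : ℝ) : ℝ :=
  if 0 ≤ x then (F (x + t) - F t) / (1 - F t) else 0

/-- The quantile function of the residual life `X_t`. -/
noncomputable def resQuantile (F : ℝ → ℝ) (t : ℝ) (p : ℝ) : ℝ :=
  quantile (resCDF F t) p

/-- `X ≤_{p₀-tvar-rl} Y`, expressed through the distribution functions `F` of `X` and `G` of `Y`: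
`∫_p^1 F_t^{-1}(u) du ≤ ∫_p^1 G_t^{-1}(u) du` for all `p ∈ [p₀, 1)` and all `t` below the right
endpoints of the supports of `X` and `Y` (equivalently, `F t < 1` and `G t < 1`). -/
def TvarRlLE (F G : ℝ → ℝ) (p₀ : ℝ) : Prop :=
  ∀ t : ℝ, F t < 1 → G t < 1 → ∀ p ∈ Set.Ico p₀ 1,
    (∫ u in p..1, resQuantile F t u) ≤ ∫ u in p..1, resQuantile G t u

section QuantileAux

open Set Filter Topology

set_option linter.unusedSectionVars false

variable (μ : Measure ℝ) [IsProbabilityMeasure μ]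

lemma qBddBelow {p : ℝ} (hp : 0 < p) : BddBelow {x : ℝ | p ≤ cdf μ x} := by
  obtain ⟨y, hy⟩ := eventually_atBot.mp ((tendsto_cdf_atBot μ).eventually_lt_const hp)
  exact ⟨y, fun x hx => le_of_not_gt fun h => (hy x h.le).not_ge hx⟩

lemma qNonempty {p : ℝ} (hp : p < 1) : {x : ℝ | p ≤ cdf μ x}.Nonempty := by
  obtain ⟨x, hx⟩ := ((tendsto_cdf_atTop μ).eventually_const_lt hp).exists
  exact ⟨x, hx.le⟩

lemma le_cdf_quantile {p : ℝ} (hp0 : 0 < p) (hp1 : p < 1) :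
    p ≤ cdf μ (quantile (fun x => cdf μ x) p) := by
  have key : ∀ x, quantile (fun x => cdf μ x) p < x → p ≤ cdf μ x := by
    intro x hx
    obtain ⟨s, hs, hsx⟩ := exists_lt_of_csInf_lt (qNonempty μ hp1) hx
    exact hs.trans (monotone_cdf μ hsx.le)
  have ht : Tendsto (cdf μ) (𝓝[>] (quantile (fun x => cdf μ x) p))
      (𝓝 (cdf μ (quantile (fun x => cdf μ x) p))) :=
    ((cdf μ).right_continuous _).mono_left (nhdsWithin_mono _ Ioi_subset_Ici_self)
  exact ge_of_tendsto ht (eventually_nhdsWithin_of_forall fun x hx => key x hx)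

lemma quantile_le_iff {p y : ℝ} (hp0 : 0 < p) (hp1 : p < 1) :
    quantile (fun x => cdf μ x) p ≤ y ↔ p ≤ cdf μ y := by
  constructor
  · exact fun h => (le_cdf_quantile μ hp0 hp1).trans (monotone_cdf μ h)
  · exact fun h => csInf_le (qBddBelow μ hp0) h

lemma quantile_mono {p p' : ℝ} (hp0 : 0 < p) (hp1 : p' < 1) (h : p ≤ p') :
    quantile (fun x => cdf μ x) p ≤ quantile (fun x => cdf μ x) p' :=
  csInf_le_csInf (qBddBelow μ hp0) (qNonempty μ hp1) (fun _ hx => h.trans hx)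

lemma quantile_aemeasurable :
    AEMeasurable (quantile (fun x => cdf μ x)) (volume.restrict (Ioo (0:ℝ) 1)) :=
  aemeasurable_restrict_of_monotoneOn measurableSet_Ioo
    (fun _ ha _ hb hab => quantile_mono μ ha.1 hb.2 hab)

lemma map_quantile :
    Measure.map (quantile (fun x => cdf μ x)) (volume.restrict (Ioo (0:ℝ) 1)) = μ := by
  have hQm := quantile_aemeasurable μ
  have hprob : IsProbabilityMeasure
      (Measure.map (quantile (fun x => cdf μ x)) (volume.restrict (Ioo (0:ℝ) 1))) := by
    constructor
    rw [Measure.map_apply_of_aemeasurable hQm MeasurableSet.univ]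
    simp [Measure.restrict_apply, Real.volume_Ioo]
  refine Measure.ext_of_Iic _ μ (fun x => ?_)
  rw [Measure.map_apply_of_aemeasurable hQm measurableSet_Iic,
    Measure.restrict_apply' measurableSet_Ioo]
  have hset : quantile (fun x => cdf μ x) ⁻¹' Iic x ∩ Ioo 0 1 = Iic (cdf μ x) ∩ Ioo 0 1 := by
    ext p
    simp only [mem_inter_iff, mem_preimage, mem_Iic, mem_Ioo, and_congr_left_iff]
    intro hp
    exact quantile_le_iff μ hp.1 hp.2
  rw [hset, ← ofReal_cdf μ x]
  rcases lt_or_ge (cdf μ x) 1 with hc | hc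
  · have : Iic (cdf μ x) ∩ Ioo 0 1 = Ioc 0 (cdf μ x) := by
      ext z
      simp only [mem_inter_iff, mem_Iic, mem_Ioo, mem_Ioc]
      constructor
      · rintro ⟨h1, h2, _⟩; exact ⟨h2, h1⟩
      · rintro ⟨h1, h2⟩; exact ⟨h2, h1, lt_of_le_of_lt h2 hc⟩
    rw [this, Real.volume_Ioc]
    simp
  · have hc1 : cdf μ x = 1 := le_antisymm (cdf_le_one μ x) hc
    have : Iic (cdf μ x) ∩ Ioo 0 1 = Ioo (0:ℝ) 1 := by
      rw [inter_eq_right]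
      exact fun z hz => le_of_lt (hc1 ▸ hz.2)
    rw [this, Real.volume_Ioo, hc1]
    norm_num

lemma integrable_quantile (hμ : Integrable id μ) :
    IntegrableOn (quantile (fun x => cdf μ x)) (Ioo (0:ℝ) 1) volume := by
  have h := (integrable_map_measure (f := quantile (fun x => cdf μ x)) (g := id)
    (by rw [map_quantile μ]; exact aestronglyMeasurable_id) (quantile_aemeasurable μ)).mp
    (by rw [map_quantile μ]; exact hμ)
  simpa [Function.comp, IntegrableOn] using h

lemma resQuantile_eq {t u : ℝ} (ht : cdf μ t < 1) (hu0 : 0 < u) (hu1 : u < 1) :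
    resQuantile (fun x => cdf μ x) t u
      = quantile (fun x => cdf μ x) (u + (1 - u) * cdf μ t) - t := by
  set c := cdf μ t with hc
  have hc0 : (0:ℝ) ≤ c := cdf_nonneg μ t
  set q := u + (1 - u) * c with hqdef
  have hq0 : 0 < q := by nlinarith
  have hq1 : q < 1 := by nlinarith
  have hcq : c < q := by nlinarith
  have hset : {x : ℝ | u ≤ resCDF (fun x => cdf μ x) t x} = {x : ℝ | q ≤ cdf μ (x + t)} := by
    ext x
    simp only [resCDF, mem_setOf_eq]
    constructor
    · intro h
      by_cases hx : 0 ≤ x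
      · rw [if_pos hx, le_div_iff₀ (by linarith : (0:ℝ) < 1 - c)] at h
        nlinarith
      · rw [if_neg hx] at h; linarith
    · intro h
      have hx : 0 ≤ x := by
        by_contra hx
        have : cdf μ (x + t) ≤ c := monotone_cdf μ (by linarith)
        linarith
      rw [if_pos hx, le_div_iff₀ (by linarith : (0:ℝ) < 1 - c)]
      nlinarith
  have hmem : q ≤ cdf μ (quantile (fun x => cdf μ x) q - t + t) := by
    rw [sub_add_cancel]
    exact le_cdf_quantile μ hq0 hq1
  rw [resQuantile, quantile, hset]
  apply le_antisymm
  · apply csInf_le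
    · obtain ⟨b, hb⟩ := qBddBelow μ hq0
      exact ⟨b - t, fun x hx => by
        have := hb hx
        linarith [hb (Set.mem_setOf_eq ▸ hx)]⟩
    · exact hmem
  · apply le_csInf
    · obtain ⟨s, hs⟩ := qNonempty μ hq1
      exact ⟨s - t, by simpa using hs⟩
    · intro x hx
      have : quantile (fun x => cdf μ x) q ≤ x + t := csInf_le (qBddBelow μ hq0) hx
      linarith

lemma integral_res {t p : ℝ} (hμ : Integrable id μ) (ht : cdf μ t < 1)
    (hp0 : 0 < p) (hp1 : p < 1) :
    (∫ u in p..1, resQuantile (fun x => cdf μ x) t u)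
      = (∫ u in p..1, quantile (fun x => cdf μ x) (u + (1 - u) * cdf μ t)) - (1 - p) * t := by
  set c := cdf μ t with hcdef
  have hc0 : (0:ℝ) ≤ c := cdf_nonneg μ t
  set a' := c + (1 - c) * p with ha'def
  have ha'0 : 0 < a' := by nlinarith
  have ha'1 : a' < 1 := by nlinarith
  have h0 : IntegrableOn (quantile (fun x => cdf μ x)) (Ioo (0:ℝ) 1) volume :=
    integrable_quantile μ hμ
  have h1 : IntervalIntegrable (quantile (fun x => cdf μ x)) volume a' 1 := by
    rw [intervalIntegrable_iff, uIoc_of_le ha'1.le]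
    refine IntegrableOn.congr_set_ae ?_ Ioo_ae_eq_Ioc.symm
    exact h0.mono_set (Ioo_subset_Ioo ha'0.le le_rfl)
  have h2 := h1.comp_add_left c
  have h3 := h2.comp_mul_left (c := 1 - c)
  have h1c : (1:ℝ) - c ≠ 0 := by linarith
  have e1 : (a' - c) / (1 - c) = p := by
    rw [ha'def, add_sub_cancel_left, mul_comm, mul_div_assoc, div_self h1c, mul_one]
  have e2 : (1 - c) / (1 - c) = 1 := div_self (by linarith)
  rw [e1, e2] at h3
  have hfun : (fun u : ℝ => quantile (fun x => cdf μ x) (u + (1 - u) * c))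
      = fun u : ℝ => quantile (fun x => cdf μ x) (c + (1 - c) * u) := by
    funext u; congr 1; ring
  have hInt : IntervalIntegrable
      (fun u : ℝ => quantile (fun x => cdf μ x) (u + (1 - u) * c)) volume p 1 := by
    rw [hfun]; exact h3
  have hcongr : (∫ u in p..1, resQuantile (fun x => cdf μ x) t u)
      = ∫ u in p..1, (quantile (fun x => cdf μ x) (u + (1 - u) * c) - t) := by
    apply intervalIntegral.integral_congr_ae
    have hne : ∀ᵐ x : ℝ ∂volume, x ∉ ({1} : Set ℝ) :=
      compl_mem_ae_iff.mpr (by simp)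
    filter_upwards [hne] with x hx hmem
    rw [uIoc_of_le hp1.le] at hmem
    have hx1 : x < 1 := lt_of_le_of_ne hmem.2 (by simpa using hx)
    exact resQuantile_eq μ ht (lt_trans hp0 hmem.1) hx1
  rw [hcongr, intervalIntegral.integral_sub hInt intervalIntegrable_const,
    intervalIntegral.integral_const]
  simp [smul_eq_mul]

end QuantileAux

/-- `X ≤_{p₀-tvar-rl} Y` if and only if
`∫_p^1 F^{-1}(u + (1-u)F(t)) du ≤ ∫_p^1 G^{-1}(u + (1-u)G(t)) du`
for all `t` below the right endpoints of the supports and all `p ∈ [p₀, 1)`. -/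
theorem stmt1 (μ ν : Measure ℝ) [IsProbabilityMeasure μ] [IsProbabilityMeasure ν]
    (hμ : Integrable id μ) (hν : Integrable id ν)
    (p₀ : ℝ) (hp₀ : p₀ ∈ Set.Ioo (0 : ℝ) 1) :
    TvarRlLE (fun x => cdf μ x) (fun x => cdf ν x) p₀ ↔
      ∀ t : ℝ, cdf μ t < 1 → cdf ν t < 1 → ∀ p ∈ Set.Ico p₀ 1,
        (∫ u in p..1, quantile (fun x => cdf μ x) (u + (1 - u) * cdf μ t))
          ≤ ∫ u in p..1, quantile (fun x => cdf ν x) (u + (1 - u) * cdf ν t) := by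
  constructor
  · intro h t htF htG p hp
    have key := h t htF htG p hp
    have hp0 : 0 < p := lt_of_lt_of_le hp₀.1 hp.1
    rw [integral_res μ hμ htF hp0 hp.2, integral_res ν hν htG hp0 hp.2] at key
    linarith
  · intro h t htF htG p hp
    have key := h t htF htG p hp
    have hp0 : 0 < p := lt_of_lt_of_le hp₀.1 hp.1
    rw [integral_res μ hμ htF hp0 hp.2, integral_res ν hν htG hp0 hp.2]
    linarith
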